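/- arXiv:1201.5992 — 2 statements merged into one kernel-verified Lean document; each statement's English description precedes it below -/
import Mathlib

section
/- Let U ⊆ F_q³ be a set of q² − 2 points that does not determine the points of C, with ∑_{u∈U} u = (0,0,0), and suppose the line at infinity l(y,z,w) meets C for the nonzero triple (y,z,w). Then σ_{2l+1}(y,z,w) = 0 for all integers l with 0 ≤ l ≤ (q² − 3)/2. -/
/-- The dot product on `F³`. -/
def dot3 {F : Type*} [Field F] (u v : F × F × F) : F :=
  u.1 * v.1 + u.2.1 * v.2.1 + u.2.2 * v.2.2

/-- The nondegenerate quadratic form `Q(t₀,t₁,t₂) = t₁² − t₀t₂` defining the conic `C`. -/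
def quadQ {F : Type*} [Field F] (t : F × F × F) : F :=
  t.2.1 ^ 2 - t.1 * t.2.2

/-- `U` does not determine the points of the conic `C`:
`Q(u − u') ≠ 0` for all distinct `u, u' ∈ U`. -/
def NoDetermine {F : Type*} [Field F] (U : Finset (F × F × F)) : Prop :=
  ∀ u ∈ U, ∀ u' ∈ U, u ≠ u' → quadQ (u - u') ≠ 0

/-- The line at infinity `l(y,z,w)` meets the conic `C`. -/
def MeetsConic {F : Type*} [Field F] (v : F × F × F) : Prop :=
  ∃ t : F × F × F, t ≠ 0 ∧ quadQ t = 0 ∧ dot3 v t = 0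

/-- `σ_i(y,z,w)`: the `i`-th elementary symmetric function of the multiset
`{u·(y,z,w) : u ∈ U}`. -/
def sigmaU {F : Type*} [Field F] (U : Finset (F × F × F)) (v : F × F × F) (i : ℕ) : F :=
  (U.val.map (fun u => dot3 u v)).esymm i

section Aux

variable {F : Type*} [Field F]

/-- The cross product on `F³`. -/
def cross3 (x y : F × F × F) : F × F × F :=
  (x.2.1 * y.2.2 - x.2.2 * y.2.1, x.2.2 * y.1 - x.1 * y.2.2, x.1 * y.2.1 - x.2.1 * y.1)

lemma cross3_eq_zero {x y : F × F × F} (hy : y ≠ 0) (h : cross3 x y = 0) :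
    ∃ c : F, x = c • y := by
  obtain ⟨x0, x1, x2⟩ := x
  obtain ⟨y0, y1, y2⟩ := y
  have h' : x1 * y2 - x2 * y1 = 0 ∧ x2 * y0 - x0 * y2 = 0 ∧ x0 * y1 - x1 * y0 = 0 := by
    simpa [cross3, Prod.ext_iff] using h
  obtain ⟨h1, h2, h3⟩ := h'
  have hy' : ¬(y0 = 0 ∧ y1 = 0 ∧ y2 = 0) := by simpa [Prod.ext_iff] using hy
  rcases (by tauto : y0 ≠ 0 ∨ y1 ≠ 0 ∨ y2 ≠ 0) with h0 | h0 | h0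
  · refine ⟨x0 / y0, ?_⟩
    simp only [Prod.smul_mk, smul_eq_mul, Prod.mk.injEq]
    refine ⟨by field_simp, ?_, ?_⟩
    · field_simp
      linear_combination -h3
    · field_simp
      linear_combination h2
  · refine ⟨x1 / y1, ?_⟩
    simp only [Prod.smul_mk, smul_eq_mul, Prod.mk.injEq]
    refine ⟨?_, by field_simp, ?_⟩
    · field_simp
      linear_combination h3
    · field_simp
      linear_combination -h1
  · refine ⟨x2 / y2, ?_⟩
    simp only [Prod.smul_mk, smul_eq_mul, Prod.mk.injEq]
    refine ⟨?_, ?_, by field_simp⟩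
    · field_simp
      linear_combination -h2
    · field_simp
      linear_combination h1

lemma quadQ_smul (c : F) (t : F × F × F) : quadQ (c • t) = c ^ 2 * quadQ t := by
  obtain ⟨t0, t1, t2⟩ := t
  simp only [quadQ, Prod.smul_mk, smul_eq_mul]
  ring

lemma cross3_triple {w a v : F × F × F} (h1 : dot3 v w = 0) (h2 : dot3 a w = 0) :
    cross3 w (cross3 a v) = 0 := by
  obtain ⟨w0, w1, w2⟩ := w
  obtain ⟨a0, a1, a2⟩ := a
  obtain ⟨v0, v1, v2⟩ := v
  simp only [dot3] at h1 h2
  simp only [cross3, Prod.ext_iff, Prod.fst_zero, Prod.snd_zero]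
  refine ⟨?_, ?_, ?_⟩
  · linear_combination a0 * h1 - v0 * h2
  · linear_combination a1 * h1 - v1 * h2
  · linear_combination a2 * h1 - v2 * h2

lemma quadQ_zero_key {v t a w : F × F × F} (htn : t ≠ 0) (hQt : quadQ t = 0)
    (hvt : dot3 v t = 0) (hat : dot3 a t = 0) (hav : cross3 a v ≠ 0)
    (hvw : dot3 v w = 0) (haw : dot3 a w = 0) : quadQ w = 0 := by
  obtain ⟨cw, hw⟩ := cross3_eq_zero hav (cross3_triple hvw haw)
  obtain ⟨ct, ht⟩ := cross3_eq_zero hav (cross3_triple hvt hat)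
  have hct : ct ≠ 0 := by
    rintro rfl
    rw [zero_smul] at ht
    exact htn ht
  have hwt : w = (cw / ct) • t := by
    rw [hw, ht, smul_smul]
    congr 1
    field_simp
  rw [hwt, quadQ_smul, hQt, mul_zero]

lemma exists_perp {t v : F × F × F} (htn : t ≠ 0) (hv : v ≠ 0) :
    ∃ a : F × F × F, dot3 a t = 0 ∧ cross3 a v ≠ 0 := by
  by_contra hcon
  push_neg at hcon
  obtain ⟨t0, t1, t2⟩ := t
  have h0 := hcon (0, t2, -t1) (by simp only [dot3]; ring)
  have h1 := hcon (-t2, 0, t0) (by simp only [dot3]; ring)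
  have h2 := hcon (t1, -t0, 0) (by simp only [dot3]; ring)
  obtain ⟨c0, hc0⟩ := cross3_eq_zero hv h0
  obtain ⟨c1, hc1⟩ := cross3_eq_zero hv h1
  obtain ⟨c2, hc2⟩ := cross3_eq_zero hv h2
  obtain ⟨v0, v1, v2⟩ := v
  simp only [Prod.smul_mk, smul_eq_mul, Prod.mk.injEq, Prod.ext_iff] at hc0 hc1 hc2
  obtain ⟨hA, hB, hC⟩ := hc0
  obtain ⟨hD, hE, hF⟩ := hc1
  obtain ⟨hG, hH, hI⟩ := hc2
  apply htn
  have e0 : t0 * t0 = 0 := by linear_combination t0 * hF - (c1 * v2) * hH + (c2 * v2) * hE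
  have e1 : t1 * t1 = 0 := by linear_combination t1 * hG - (c2 * v0) * hC + (c2 * v2) * hA
  have e2 : t2 * t2 = 0 := by linear_combination t2 * hB - (c0 * v1) * hD + (c1 * v1) * hA
  have ht0 : t0 = 0 := mul_self_eq_zero.mp e0
  have ht1 : t1 = 0 := mul_self_eq_zero.mp e1
  have ht2 : t2 = 0 := mul_self_eq_zero.mp e2
  rw [ht0, ht1, ht2]
  rfl

lemma fiber_card_le {F : Type*} [Field F] [Fintype F] [DecidableEq F]
    {U : Finset (F × F × F)} (hU : NoDetermine U) {v t : F × F × F} (hv : v ≠ 0)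
    (htn : t ≠ 0) (hQt : quadQ t = 0) (hvt : dot3 v t = 0) (c : F) :
    (U.filter (fun u => dot3 u v = c)).card ≤ Fintype.card F := by
  obtain ⟨a, hat, hav⟩ := exists_perp htn hv
  have hinj : Set.InjOn (fun u => dot3 a u) (U.filter (fun u => dot3 u v = c)) := by
    intro u hu u' hu' he
    simp only [Finset.coe_filter, Set.mem_setOf_eq] at hu hu'
    by_contra hne
    apply hU u hu.1 u' hu'.1 hne
    apply quadQ_zero_key htn hQt hvt hat hav (w := u - u')
    · have hc1 := hu.2
      have hc2 := hu'.2
      simp only [dot3, Prod.fst_sub, Prod.snd_sub] at hc1 hc2 ⊢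
      linear_combination hc1 - hc2
    · simp only [dot3, Prod.fst_sub, Prod.snd_sub] at *
      linear_combination he
  calc (U.filter (fun u => dot3 u v = c)).card
      ≤ (Finset.univ : Finset F).card :=
        Finset.card_le_card_of_injOn (fun u => dot3 a u) (fun _ _ => Finset.mem_univ _) hinj
    _ = Fintype.card F := Finset.card_univ

end Aux

theorem stmt_3 {p h : ℕ} (hp : p.Prime) (hodd : Odd p) (hh : 1 ≤ h)
    {F : Type*} [Field F] [Fintype F] [DecidableEq F]
    (hcard : Fintype.card F = p ^ h)
    (U : Finset (F × F × F))
    (hUcard : U.card = Fintype.card F ^ 2 - 2)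
    (hU : NoDetermine U)
    (hsum : ∑ u ∈ U, u = 0)
    (v : F × F × F) (hv : v ≠ 0) (hmeet : MeetsConic v) :
    ∀ l : ℕ, l ≤ (Fintype.card F ^ 2 - 3) / 2 → sigmaU U v (2 * l + 1) = 0 := by
  intro l _
  obtain ⟨t, htn, hQt, hvt⟩ := hmeet
  classical
  set q := Fintype.card F with hq
  -- characteristic facts
  have hq2 : 2 ≤ q := Fintype.one_lt_card
  have hcharp : CharP F (ringChar F) := ringChar.charP F
  obtain ⟨n, hrp, hn⟩ := FiniteField.card F (ringChar F)
  have hpr : p = ringChar F := by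
    have hdvd : p ∣ ringChar F ^ (n : ℕ) := by
      rw [← hn, ← hq, hcard]
      exact dvd_pow_self p (by omega)
    exact (Nat.prime_dvd_prime_iff_eq hp hrp).mp (hp.dvd_of_dvd_pow hdvd)
  have hpF : (p : F) = 0 := by rw [hpr]; exact CharP.cast_eq_zero F _
  have hqF : ((q : ℕ) : F) = 0 := by
    rw [hcard]
    push_cast
    rw [hpF, zero_pow (by omega)]
  have h2F : (2 : F) ≠ 0 := by
    have hp2 : p ≠ 2 := by
      rintro rfl
      exact (by decide : ¬ Odd 2) hodd
    intro h2
    haveI : CharP F p := hpr ▸ hcharp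
    have hdvd : p ∣ 2 := (CharP.cast_eq_zero_iff F p 2).mp (by exact_mod_cast h2)
    rcases (Nat.prime_two.eq_one_or_self_of_dvd p hdvd) with h' | h'
    · exact hp.ne_one h'
    · exact hp2 h'
  -- the multiset of dot products
  set M : Multiset F := U.val.map (fun u => dot3 u v) with hM
  have hMcard : Multiset.card M = q ^ 2 - 2 := by
    rw [hM, Multiset.card_map]
    exact hUcard
  have hcount : ∀ c : F, M.count c ≤ q := by
    intro c
    rw [hM, Multiset.count_map]
    have hfil : U.val.filter (fun u => c = dot3 u v) = U.val.filter (fun u => dot3 u v = c) :=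
      Multiset.filter_congr (fun x _ => eq_comm)
    rw [hfil]
    have := fiber_card_le hU hv htn hQt hvt c
    rw [Finset.card_filter] at this
    calc Multiset.card (U.val.filter fun u => dot3 u v = c)
        = (U.filter (fun u => dot3 u v = c)).card := by
          rw [Finset.card, Finset.filter_val]
      _ ≤ Fintype.card F := fiber_card_le hU hv htn hQt hvt c
  set T : Multiset F := q • (Finset.univ.val : Multiset F) with hT
  have hcT : ∀ c : F, T.count c = q := by
    intro c
    rw [hT, Multiset.count_nsmul, Multiset.count_univ, mul_one]
  have hMT : M ≤ T := Multiset.le_iff_count.mpr fun c => (hcount c).trans (hcT c).ge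
  have hTcard : Multiset.card T = q * q := by
    rw [hT, Multiset.card_nsmul]
    rfl
  set D := T - M with hD
  have hq2' : 2 ≤ q ^ 2 := le_trans hq2 (Nat.le_self_pow two_ne_zero q)
  have hDcard : Multiset.card D = 2 := by
    rw [hD, Multiset.card_sub hMT, hTcard, hMcard, ← pow_two]
    omega
  -- sums
  have hMsum : M.sum = 0 := by
    have hφ : ∀ (W : Finset (F × F × F)), ∑ u ∈ W, dot3 u v = dot3 (∑ u ∈ W, u) v := by
      intro W
      let φ : (F × F × F) →+ F :=
        { toFun := fun u => dot3 u v
          map_zero' := by simp [dot3]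
          map_add' := by
            intro a b
            simp only [dot3, Prod.fst_add, Prod.snd_add]
            ring }
      exact (map_sum φ id W).symm
    have : M.sum = ∑ u ∈ U, dot3 u v := rfl
    rw [this, hφ, hsum]
    simp [dot3]
  have hTsum : T.sum = 0 := by
    have : T.sum = q • (Finset.univ.val : Multiset F).sum := by
      rw [hT]
      exact map_nsmul Multiset.sumAddMonoidHom q _
    rw [this, nsmul_eq_mul, hqF, zero_mul]
  have hDsum : D.sum = 0 := by
    have hadd : D + M = T := tsub_add_cancel_of_le hMT
    have h' := congrArg Multiset.sum hadd
    rw [Multiset.sum_add, hMsum, add_zero] at h'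
    rw [h', hTsum]
  -- D = {x, -x}
  obtain ⟨x, y, hxy⟩ := Multiset.card_eq_two.mp hDcard
  have hyx : y = -x := by
    have hx : x + y = 0 := by
      rw [hxy] at hDsum
      simpa using hDsum
    exact eq_neg_of_add_eq_zero_right hx
  have hDsym : ∀ c : F, D.count c = D.count (-c) := by
    have key : ∀ z : F, D.count z = (if z = x then 1 else 0) + (if z = -x then 1 else 0) := by
      intro z
      rw [hxy, hyx]
      simp only [Multiset.insert_eq_cons, Multiset.count_cons, Multiset.count_singleton]
      ring
    intro c
    rw [key, key]
    have e1 : (-c = x) ↔ (c = -x) := ⟨fun hh => by rw [← hh, neg_neg], fun hh => by rw [hh, neg_neg]⟩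
    simp only [neg_inj, e1]
    exact add_comm _ _
  have hcMD : ∀ c : F, M.count c = q - D.count c := by
    intro c
    have h1 : D.count c = q - M.count c := by
      rw [hD, Multiset.count_sub, hcT]
    have h2 := hcount c
    omega
  have hMsym : ∀ c : F, M.count c = M.count (-c) := by
    intro c
    rw [hcMD, hcMD, hDsym c]
  have hMneg : M.map (fun x => -x) = M := by
    ext c
    have hcm := Multiset.count_map_eq_count' (fun x : F => -x) M neg_injective (-c)
    rw [neg_neg] at hcm
    rw [hcm, ← hMsym c]
  -- conclude via esymm
  have hodd' : Odd (2 * l + 1) := ⟨l, by ring⟩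
  have hes := Multiset.pow_smul_esymm (-1 : F) (2 * l + 1) M
  have hmapeq : M.map (fun x : F => (-1 : F) • x) = M := by
    rw [show (fun x : F => (-1 : F) • x) = (fun x : F => -x) from funext fun x => by
      rw [neg_one_smul]]
    exact hMneg
  rw [hmapeq, Odd.neg_one_pow hodd', neg_smul, one_smul] at hes
  have h2e : (2 : F) * M.esymm (2 * l + 1) = 0 := by
    rw [two_mul]
    exact add_eq_zero_iff_neg_eq.mpr hes
  have hfin : M.esymm (2 * l + 1) = 0 := by
    rcases mul_eq_zero.mp h2e with h' | h'
    · exact absurd h' h2F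
    · exact h'
  show M.esymm (2 * l + 1) = 0
  exact hfin
end

section
/- Let U ⊆ F_q³ be a set of q² − 2 points that does not determine the points of C, with ∑_{u∈U} u = (0,0,0). Then for every integer l with 0 ≤ l ≤ (q − 1)/2, one has the polynomial identity σ_{2l}(Y,Z,W) = σ₂(Y,Z,W)^l in F_q[Y,Z,W]. -/
/-- The linear form `u₀Y + u₁Z + u₂W` in `F[Y,Z,W]` associated to `u ∈ F³`. -/
noncomputable def linForm {F : Type*} [Field F] (u : F × F × F) : MvPolynomial (Fin 3) F :=
  MvPolynomial.C u.1 * MvPolynomial.X 0 + MvPolynomial.C u.2.1 * MvPolynomial.X 1 +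
    MvPolynomial.C u.2.2 * MvPolynomial.X 2

/-- `σ_i(Y,Z,W)`: the `i`-th elementary symmetric polynomial of the multiset of linear
forms `{u₀Y + u₁Z + u₂W : u ∈ U}`, as a polynomial in `F[Y,Z,W]`. -/
noncomputable def sigmaPoly {F : Type*} [Field F] (U : Finset (F × F × F)) (i : ℕ) :
    MvPolynomial (Fin 3) F :=
  (U.val.map linForm).esymm i

open Polynomial

/- ### Auxiliary lemmas -/

theorem aux_esymm_hom {R S : Type*} [CommRing R] [CommRing S] (f : R →+* S)
    (s : Multiset R) (n : ℕ) : (s.map f).esymm n = f (s.esymm n) := by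
  unfold Multiset.esymm
  rw [map_multiset_sum, Multiset.powersetCard_map, Multiset.map_map, Multiset.map_map]
  congr 1
  apply Multiset.map_congr rfl
  intro t _
  simp [map_multiset_prod]

theorem aux_esymm_zero {R : Type*} [CommRing R] (s : Multiset R) : s.esymm 0 = 1 := by
  simp [Multiset.esymm, Multiset.powersetCard_zero_left]

theorem aux_esymm_replicate_zero {F : Type*} [Field F] (n i : ℕ) (h1 : 1 ≤ i) (h2 : i ≤ n) :
    (Multiset.replicate n (0 : F)).esymm i = 0 := by
  have hcard : Multiset.card (Multiset.replicate n (0 : F)) = n := Multiset.card_replicate _ _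
  have hco := Multiset.prod_X_add_C_coeff (Multiset.replicate n (0 : F))
    (show n - i ≤ Multiset.card (Multiset.replicate n (0 : F)) by omega)
  rw [hcard] at hco
  rw [show n - (n - i) = i by omega] at hco
  rw [← hco, Multiset.map_replicate, Multiset.prod_replicate]
  simp only [map_zero, add_zero]
  rw [← pow_one X, ← pow_mul, Polynomial.coeff_X_pow]
  rw [if_neg (by omega)]

theorem aux_dot3_sub {F : Type*} [Field F] (u u' v : F × F × F) :
    dot3 (u - u') v = dot3 u v - dot3 u' v := by
  obtain ⟨a, b, c⟩ := u; obtain ⟨a', b', c'⟩ := u'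
  simp only [dot3, Prod.mk_sub_mk]
  ring

theorem aux_dot3_sum {F : Type*} [Field F] {ι : Type*} (s : Finset ι) (f : ι → F × F × F)
    (v : F × F × F) : ∑ u ∈ s, dot3 (f u) v = dot3 (∑ u ∈ s, f u) v := by
  classical
  induction s using Finset.induction_on with
  | empty => simp [dot3]
  | insert _ _ h ih =>
    have hadd : ∀ x y : F × F × F, dot3 (x + y) v = dot3 x v + dot3 y v := by
      intro x y
      obtain ⟨a1, b1, c1⟩ := x; obtain ⟨a2, b2, c2⟩ := y
      simp only [dot3, Prod.mk_add_mk]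
      ring
    rw [Finset.sum_insert h, Finset.sum_insert h, ih, hadd]

theorem aux_exists_beta {F : Type*} [Field F] {v t : F × F × F}
    (hv : v ≠ 0) (ht0 : t ≠ 0) (htQ : quadQ t = 0) (htv : dot3 v t = 0) :
    ∃ b : F × F × F, ∀ d : F × F × F, dot3 d v = 0 → dot3 d b = 0 → quadQ d = 0 := by
  obtain ⟨t0, t1, t2⟩ := t
  obtain ⟨v0, v1, v2⟩ := v
  simp only [quadQ, dot3] at htQ htv ⊢
  by_cases ht : t0 ≠ 0
  · set m := t1 / t0 with hm
    have h1 : t1 = t0 * m := by rw [hm]; field_simp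
    have h2 : t2 = t0 * m ^ 2 := by
      have hz : t0 * (t0 * m ^ 2 - t2) = 0 := by
        linear_combination htQ - (t1 + t0 * m) * h1
      rcases mul_eq_zero.1 hz with hzz | hzz
      · exact absurd hzz ht
      · linear_combination -hzz
    have hv0 : v0 = -(v1 * m + v2 * m ^ 2) := by
      have : t0 * (v0 + v1 * m + v2 * m ^ 2) = 0 := by
        rw [h1, h2] at htv; ring_nf; ring_nf at htv; linear_combination htv
      rcases mul_eq_zero.1 this with h | h
      · exact absurd h ht
      · linear_combination h
    by_cases hv2 : v2 ≠ 0
    · refine ⟨(-m, 1, 0), fun d hdv hdb => ?_⟩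
      obtain ⟨d0, d1, d2⟩ := d
      simp only [dot3, quadQ] at hdv hdb ⊢
      have hd1 : d1 = m * d0 := by linear_combination hdb
      have hd2 : d2 = m ^ 2 * d0 := by
        have : v2 * (d2 - m ^ 2 * d0) = 0 := by
          rw [hv0] at hdv; rw [hd1] at hdv; linear_combination hdv
        rcases mul_eq_zero.1 this with h | h
        · exact absurd h hv2
        · linear_combination h
      rw [hd1, hd2]; ring
    · push_neg at hv2
      have hv1 : v1 ≠ 0 := by
        rintro rfl
        apply hv
        simp only [hv2, hv0]
        norm_num
      refine ⟨(-m ^ 2, 0, 1), fun d hdv hdb => ?_⟩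
      obtain ⟨d0, d1, d2⟩ := d
      simp only [dot3, quadQ] at hdv hdb ⊢
      have hd2 : d2 = m ^ 2 * d0 := by linear_combination hdb
      have hd1 : d1 = m * d0 := by
        have : v1 * (d1 - m * d0) = 0 := by
          rw [hv0, hv2] at hdv; linear_combination hdv
        rcases mul_eq_zero.1 this with h | h
        · exact absurd h hv1
        · linear_combination h
      rw [hd1, hd2]; ring
  · push_neg at ht
    subst ht
    have ht1 : t1 = 0 := by
      have : t1 ^ 2 = 0 := by linear_combination htQ
      exact pow_eq_zero_iff (by norm_num) |>.1 this
    subst ht1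
    have ht2 : t2 ≠ 0 := by rintro rfl; exact ht0 rfl
    have hv2 : v2 = 0 := by
      have : v2 * t2 = 0 := by linear_combination htv
      rcases mul_eq_zero.1 this with h | h
      · exact h
      · exact absurd h ht2
    by_cases hv1 : v1 ≠ 0
    · refine ⟨(1, 0, 0), fun d hdv hdb => ?_⟩
      obtain ⟨d0, d1, d2⟩ := d
      simp only [dot3, quadQ] at hdv hdb ⊢
      have hd0 : d0 = 0 := by linear_combination hdb
      have hd1 : d1 = 0 := by
        have : v1 * d1 = 0 := by rw [hd0, hv2] at hdv; linear_combination hdv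
        rcases mul_eq_zero.1 this with h | h
        · exact absurd h hv1
        · exact h
      rw [hd0, hd1]; ring
    · push_neg at hv1
      have hv0 : v0 ≠ 0 := by
        rintro rfl; exact hv (by simp [hv1, hv2])
      refine ⟨(0, 1, 0), fun d hdv hdb => ?_⟩
      obtain ⟨d0, d1, d2⟩ := d
      simp only [dot3, quadQ] at hdv hdb ⊢
      have hd1 : d1 = 0 := by linear_combination hdb
      have hd0 : d0 = 0 := by
        have : v0 * d0 = 0 := by rw [hd1, hv1, hv2] at hdv; linear_combination hdv
        rcases mul_eq_zero.1 this with h | h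
        · exact absurd h hv0
        · exact h
      rw [hd0, hd1]; ring

theorem aux_fiber_card_le {F : Type*} [Field F] [Fintype F] [DecidableEq F]
    (U : Finset (F × F × F)) (hU : NoDetermine U) {v b : F × F × F}
    (hb : ∀ d : F × F × F, dot3 d v = 0 → dot3 d b = 0 → quadQ d = 0)
    (c : F) : (U.filter (fun u => c = dot3 u v)).card ≤ Fintype.card F := by
  have : (U.filter (fun u => c = dot3 u v)).card ≤ (Finset.univ : Finset F).card := by
    apply Finset.card_le_card_of_injOn (fun u => dot3 u b) (fun _ _ => Finset.mem_univ _)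
    intro u hu u' hu' heq
    simp only [Finset.mem_coe, Finset.mem_filter] at hu hu'
    by_contra hne
    apply hU u hu.1 u' hu'.1 hne
    apply hb
    · rw [aux_dot3_sub, ← hu.2, ← hu'.2, sub_self]
    · simp only at heq
      rw [aux_dot3_sub, heq, sub_self]
  simpa using this

theorem aux_multiset_structure {F : Type*} [Field F] [Fintype F] [DecidableEq F]
    (h2 : (2 : F) ≠ 0)
    (U : Finset (F × F × F)) (hUcard : U.card = Fintype.card F ^ 2 - 2)
    (hU : NoDetermine U) (hsum : ∑ u ∈ U, u = 0)
    (hq3 : 3 ≤ Fintype.card F)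
    {v b : F × F × F}
    (hb : ∀ d : F × F × F, dot3 d v = 0 → dot3 d b = 0 → quadQ d = 0) :
    ∃ a : F, (U.val.map (fun u => dot3 u v)) + {a, -a}
      = (Fintype.card F) • (Finset.univ.val : Multiset F) := by
  classical
  set q := Fintype.card F with hqdef
  set M : Multiset F := U.val.map (fun u => dot3 u v) with hM
  have hqq : 3 * q ≤ q * q := Nat.mul_le_mul_right _ hq3
  have hcount : ∀ c : F, M.count c ≤ q := by
    intro c
    rw [hM, Multiset.count_map]
    have : (Multiset.filter (fun u => c = dot3 u v) U.val).card
        = (U.filter (fun u => c = dot3 u v)).card := rfl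
    rw [this]
    exact aux_fiber_card_le U hU hb c
  have hle : M ≤ q • (Finset.univ.val : Multiset F) := by
    rw [Multiset.le_iff_count]
    intro a
    rw [Multiset.count_nsmul, Multiset.count_univ, mul_one]
    exact hcount a
  set D : Multiset F := q • (Finset.univ.val : Multiset F) - M with hD
  have hMD : M + D = q • (Finset.univ.val : Multiset F) := add_tsub_cancel_of_le hle
  have hMcard : Multiset.card M = q ^ 2 - 2 := by
    rw [hM, Multiset.card_map]; exact hUcard
  have hDcard : Multiset.card D = 2 := by
    have := congrArg Multiset.card hMD
    have hcu : Multiset.card (Finset.univ.val : Multiset F) = q := Finset.card_univ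
    rw [Multiset.card_add, Multiset.card_nsmul, hcu, hMcard] at this
    have hsq : q ^ 2 = q * q := sq q
    omega
  obtain ⟨x, y, hxy⟩ := Multiset.card_eq_two.1 hDcard
  have hsumuniv : (Finset.univ.val : Multiset F).sum = 0 := by
    have hid : (Finset.univ.val : Multiset F).sum = ∑ c : F, c := by
      rw [← Multiset.map_id (Finset.univ.val : Multiset F)]; rfl
    rw [hid]
    have h : ∑ c : F, c = ∑ c : F, -c := Fintype.sum_equiv (Equiv.neg F) _ _ (by simp)
    have h2' : (2 : F) * ∑ c : F, c = 0 := by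
      rw [two_mul]; nth_rewrite 2 [h]; rw [← Finset.sum_add_distrib]; simp
    rcases mul_eq_zero.1 h2' with h' | h'
    · exact absurd h' h2
    · exact h'
  have hMsum : M.sum = 0 := by
    have : M.sum = ∑ u ∈ U, dot3 u v := rfl
    rw [this, aux_dot3_sum, hsum]
    simp [dot3]
  have htot : (q • (Finset.univ.val : Multiset F)).sum = 0 := by
    rw [Multiset.sum_nsmul, hsumuniv, smul_zero]
  have hxysum : x + y = 0 := by
    have := congrArg Multiset.sum hMD
    rw [Multiset.sum_add, hMsum, hxy, htot] at this
    simpa using this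
  refine ⟨x, ?_⟩
  rw [show y = -x from by linear_combination hxysum] at hxy
  rw [← hxy]
  exact hMD

theorem aux_charP_of_card {F : Type*} [Field F] [Fintype F] {p h : ℕ} (hp : p.Prime)
    (hh : 1 ≤ h) (hcard : Fintype.card F = p ^ h) : CharP F p := by
  have hchar : CharP F (ringChar F) := ringChar.charP F
  obtain ⟨n, hrp, hcard'⟩ := FiniteField.card F (ringChar F)
  have hdvd : ringChar F ∣ p ^ h := by
    rw [← hcard, hcard']
    exact dvd_pow_self _ (by positivity)
  have := (Nat.prime_dvd_prime_iff_eq hrp hp).1 (hrp.dvd_of_dvd_pow hdvd)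
  rwa [← this]

theorem aux_prod_identity {F : Type*} [Field F] [Fintype F] [DecidableEq F]
    {p h : ℕ} (hp : p.Prime) (hh : 1 ≤ h) (hcard : Fintype.card F = p ^ h)
    (M : Multiset F) (a : F)
    (ha : M + {a, -a} = (Fintype.card F) • (Finset.univ.val : Multiset F)) :
    (M.map (fun r => X + C r)).prod * (X ^ 2 - C (a ^ 2))
      = X ^ (Fintype.card F ^ 2) - X ^ (Fintype.card F) := by
  haveI : Fact p.Prime := ⟨hp⟩
  haveI : CharP F p := aux_charP_of_card hp hh hcard
  have hq2 : 1 < Fintype.card F := Fintype.one_lt_card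
  have key := congrArg (fun s : Multiset F => (s.map (fun r => X + C r)).prod) ha
  simp only [Multiset.map_add, Multiset.prod_add, Multiset.map_nsmul, Multiset.prod_nsmul,
    Multiset.insert_eq_cons, Multiset.map_cons, Multiset.map_singleton, Multiset.prod_cons,
    Multiset.prod_singleton] at key
  have hprodsub : (Finset.univ.val.map (fun c : F => X - C c)).prod
      = X ^ (Fintype.card F) - X := by
    have hmonic : (X ^ (Fintype.card F) - X : F[X]).Monic := by
      rw [show Fintype.card F = (Fintype.card F - 1) + 1 by omega]
      apply Polynomial.monic_X_pow_sub
      rw [Polynomial.degree_X]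
      exact_mod_cast (show (1:ℕ) < Fintype.card F - 1 + 1 by omega)
    have hdeg := FiniteField.X_pow_card_sub_X_natDegree_eq F hq2
    have hroots := FiniteField.roots_X_pow_card_sub_X F
    have := Polynomial.prod_multiset_X_sub_C_of_monic_of_roots_card_eq hmonic
      (by rw [hroots, hdeg]; simp [Finset.card_univ])
    rw [hroots] at this
    simpa using this
  have hprodadd : (Finset.univ.val.map (fun c : F => X + C c)).prod
      = X ^ (Fintype.card F) - X := by
    rw [← hprodsub]
    have h1 : (Finset.univ.val.map (fun c : F => X + C c)).prod = ∏ c : F, (X + C c) := rfl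
    have h2 : (Finset.univ.val.map (fun c : F => X - C c)).prod = ∏ c : F, (X - C c) := rfl
    rw [h1, h2]
    exact Fintype.prod_equiv (Equiv.neg F) _ _ (by intro c; simp [sub_eq_add_neg])
  rw [hprodadd] at key
  have hfrob : ((X : F[X]) ^ (Fintype.card F) - X) ^ (Fintype.card F)
      = X ^ (Fintype.card F ^ 2) - X ^ (Fintype.card F) := by
    haveI : CharP F[X] p := Polynomial.instCharP p
    rw [hcard, sub_pow_char_pow, ← pow_mul, ← sq]
  rw [hfrob] at key
  rw [← key]
  have : (X + C a) * (X + C (-a)) = X ^ 2 - C (a ^ 2) := by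
    rw [map_neg, map_pow]
    ring
  rw [← this]
  try ring

theorem aux_coeffrec {F : Type*} [Field F] [Fintype F] [DecidableEq F] (M : Multiset F) (A : F)
    (hcard : Multiset.card M = Fintype.card F ^ 2 - 2)
    (hq3 : 3 ≤ Fintype.card F)
    (heq : (M.map (fun r => X + C r)).prod * (X ^ 2 - C A)
      = X ^ (Fintype.card F ^ 2) - X ^ (Fintype.card F)) :
    ∀ i, 2 ≤ i → i ≤ Fintype.card F - 1 → M.esymm i = A * M.esymm (i - 2) := by
  intro i h2i hiq
  set q := Fintype.card F with hq
  have hqq : 3 * q ≤ q * q := Nat.mul_le_mul_right _ hq3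
  have hsq : q ^ 2 = q * q := sq q
  set n := Multiset.card M with hn
  have hnval : n = q ^ 2 - 2 := hcard
  have hnq : n = q * q - 2 := by rw [hnval, hsq]
  have hin : i ≤ n := by omega
  set P := (M.map (fun r => X + C r)).prod with hP
  have heq' : P * X ^ 2 - C A * P = X ^ (q ^ 2) - X ^ q := by
    rw [← heq]; ring
  have hco := congrArg (fun f => Polynomial.coeff f (n - i + 2)) heq'
  simp only [Polynomial.coeff_sub, Polynomial.coeff_C_mul] at hco
  rw [Polynomial.coeff_mul_X_pow] at hco
  have hc1 : P.coeff (n - i) = M.esymm i := by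
    rw [hP, Multiset.prod_X_add_C_coeff M (by omega : n - i ≤ Multiset.card M)]
    congr 1; omega
  have hc2 : P.coeff (n - i + 2) = M.esymm (i - 2) := by
    have hle : n - i + 2 ≤ Multiset.card M := by omega
    rw [hP, Multiset.prod_X_add_C_coeff M hle]
    congr 1; omega
  rw [hc1, hc2] at hco
  rw [Polynomial.coeff_X_pow, Polynomial.coeff_X_pow] at hco
  rw [if_neg (by rw [hsq]; omega), if_neg (by omega)] at hco
  linear_combination hco

/-- The key pointwise identity, valid at any point `v` whose line meets the conic. -/
theorem aux_pointwise {p h : ℕ} (hp : p.Prime) (hodd : Odd p) (hh : 1 ≤ h)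
    {F : Type*} [Field F] [Fintype F] [DecidableEq F]
    (hcard : Fintype.card F = p ^ h)
    (U : Finset (F × F × F)) (hUcard : U.card = Fintype.card F ^ 2 - 2)
    (hU : NoDetermine U) (hsum : ∑ u ∈ U, u = 0)
    (v : F × F × F) (hmeet : ∃ t : F × F × F, t ≠ 0 ∧ quadQ t = 0 ∧ dot3 v t = 0) :
    ∀ l : ℕ, 2 * l ≤ Fintype.card F - 1 →
      (U.val.map (fun u => dot3 u v)).esymm (2 * l)
        = ((U.val.map (fun u => dot3 u v)).esymm 2) ^ l := by
  haveI : Fact p.Prime := ⟨hp⟩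
  haveI hcharF : CharP F p := aux_charP_of_card hp hh hcard
  have hp3 : 3 ≤ p := by
    have h2le := hp.two_le
    rcases eq_or_lt_of_le h2le with heq | hlt
    · exfalso
      rw [← heq] at hodd
      exact (Nat.not_odd_iff_even.mpr even_two) hodd
    · omega
  have hq3 : 3 ≤ Fintype.card F := by
    rw [hcard]
    calc 3 ≤ p := hp3
    _ ≤ p ^ h := Nat.le_self_pow (by omega) p
  have h2 : (2 : F) ≠ 0 := by
    intro h0
    have h0' : ((2 : ℕ) : F) = 0 := by exact_mod_cast h0
    have := (CharP.cast_eq_zero_iff F p 2).1 h0'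
    have := Nat.le_of_dvd (by norm_num) this
    omega
  have hqq : 3 * Fintype.card F ≤ Fintype.card F * Fintype.card F :=
    Nat.mul_le_mul_right _ hq3
  have hsq : Fintype.card F ^ 2 = Fintype.card F * Fintype.card F := sq (Fintype.card F)
  by_cases hv : v = 0
  · subst hv
    have hM0 : U.val.map (fun u => dot3 u 0) = Multiset.replicate (Fintype.card F ^ 2 - 2) 0 := by
      rw [show (fun u : F × F × F => dot3 u 0) = (fun _ => (0 : F)) from by
        funext u; simp [dot3]]
      rw [Multiset.map_const']
      congr 1
    intro l hl
    rcases Nat.eq_zero_or_pos l with rfl | hlpos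
    · simp [aux_esymm_zero]
    · rw [hM0, aux_esymm_replicate_zero _ (2 * l) (by omega) (by omega),
        aux_esymm_replicate_zero _ 2 (by omega) (by omega), zero_pow (by omega)]
  · obtain ⟨t, ht0, htQ, htv⟩ := hmeet
    obtain ⟨b, hb⟩ := aux_exists_beta hv ht0 htQ htv
    obtain ⟨a, ha⟩ := aux_multiset_structure h2 U hUcard hU hsum hq3 hb
    set M : Multiset F := U.val.map (fun u => dot3 u v) with hM
    have hMcard : Multiset.card M = Fintype.card F ^ 2 - 2 := by
      rw [hM, Multiset.card_map]; exact hUcard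
    have heq := aux_prod_identity hp hh hcard M a ha
    have hrec := aux_coeffrec M (a ^ 2) hMcard hq3 heq
    have he2 : M.esymm 2 = a ^ 2 := by
      rw [hrec 2 le_rfl (by omega)]
      simp [aux_esymm_zero]
    have hpow : ∀ l : ℕ, 2 * l ≤ Fintype.card F - 1 → M.esymm (2 * l) = (a ^ 2) ^ l := by
      intro l
      induction l with
      | zero => intro _; simpa using aux_esymm_zero M
      | succ k ih =>
        intro hle
        have h1 : 2 * (k + 1) = 2 * k + 2 := by ring
        rw [h1, hrec (2 * k + 2) (by omega) (by omega),
          show 2 * k + 2 - 2 = 2 * k from by omega, ih (by omega), pow_succ]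
        ring
    intro l hl
    rw [hpow l hl, he2]

theorem aux_totalDegree_linForm {F : Type*} [Field F] (u : F × F × F) :
    (linForm u).totalDegree ≤ 1 := by
  unfold linForm
  apply le_trans (MvPolynomial.totalDegree_add _ _)
  apply max_le
  · apply le_trans (MvPolynomial.totalDegree_add _ _)
    apply max_le
    all_goals
      apply le_trans (MvPolynomial.totalDegree_mul _ _)
      simp [MvPolynomial.totalDegree_C, MvPolynomial.totalDegree_X]
  · apply le_trans (MvPolynomial.totalDegree_mul _ _)
    simp [MvPolynomial.totalDegree_C, MvPolynomial.totalDegree_X]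

theorem aux_totalDegree_mprod {σ F : Type*} [Field F] (t : Multiset (MvPolynomial σ F))
    (ht : ∀ x ∈ t, x.totalDegree ≤ 1) : t.prod.totalDegree ≤ Multiset.card t := by
  induction t using Multiset.induction_on with
  | empty => simp
  | cons a t ih =>
    rw [Multiset.prod_cons]
    apply le_trans (MvPolynomial.totalDegree_mul _ _)
    rw [Multiset.card_cons]
    have h1 := ht a (Multiset.mem_cons_self a t)
    have h2 := ih (fun x hx => ht x (Multiset.mem_cons_of_mem hx))
    omega

theorem aux_totalDegree_msum {σ F : Type*} [Field F] (s : Multiset (MvPolynomial σ F)) (d : ℕ)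
    (hs : ∀ x ∈ s, x.totalDegree ≤ d) : s.sum.totalDegree ≤ d := by
  induction s using Multiset.induction_on with
  | empty => simp
  | cons a t ih =>
    rw [Multiset.sum_cons]
    apply le_trans (MvPolynomial.totalDegree_add _ _)
    exact max_le (hs a (Multiset.mem_cons_self a t))
      (ih (fun x hx => hs x (Multiset.mem_cons_of_mem hx)))

theorem aux_totalDegree_sigmaPoly {F : Type*} [Field F] (U : Finset (F × F × F)) (i : ℕ) :
    (sigmaPoly U i).totalDegree ≤ i := by
  unfold sigmaPoly Multiset.esymm
  apply aux_totalDegree_msum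
  intro x hx
  rw [Multiset.mem_map] at hx
  obtain ⟨t, ht, rfl⟩ := hx
  rw [Multiset.mem_powersetCard] at ht
  have hcard : Multiset.card t = i := ht.2
  rw [← hcard]
  apply aux_totalDegree_mprod
  intro x hxt
  have hxle := Multiset.mem_of_le ht.1 hxt
  rw [Multiset.mem_map] at hxle
  obtain ⟨u, _, rfl⟩ := hxle
  exact aux_totalDegree_linForm u


theorem aux_eval_eval {F : Type*} [Field F] {n : ℕ} (g : MvPolynomial (Fin (n + 1)) F)
    (r : MvPolynomial (Fin n) F) (s : Fin n → F) :
    MvPolynomial.eval s ((MvPolynomial.finSuccEquiv F n g).eval r)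
      = MvPolynomial.eval (Fin.cons (MvPolynomial.eval s r) s) g := by
  rw [MvPolynomial.eval_eq_eval_mv_eval', Polynomial.eval_map, ← Polynomial.eval₂_hom]

theorem aux_totalDegree_eval_le {F : Type*} [Field F] {n : ℕ} (g : MvPolynomial (Fin (n + 1)) F)
    (r : MvPolynomial (Fin n) F) (hr : r.totalDegree ≤ 1) (d : ℕ) (hg : g.totalDegree ≤ d) :
    ((MvPolynomial.finSuccEquiv F n g).eval r).totalDegree ≤ d := by
  rw [Polynomial.eval_eq_sum_range]
  apply le_trans (MvPolynomial.totalDegree_finset_sum _ _)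
  apply Finset.sup_le
  intro j _
  by_cases hcj : (MvPolynomial.finSuccEquiv F n g).coeff j = 0
  · simp [hcj]
  · apply le_trans (MvPolynomial.totalDegree_mul _ _)
    have h1 := MvPolynomial.totalDegree_coeff_finSuccEquiv_add_le g j hcj
    have h2 : (r ^ j).totalDegree ≤ j * 1 :=
      le_trans (MvPolynomial.totalDegree_pow _ _) (Nat.mul_le_mul_left j hr)
    omega

theorem aux_zero_of_eval {F : Type*} [Field F] [Fintype F] [DecidableEq F] :
    ∀ (n : ℕ) (g : MvPolynomial (Fin n) F), g.totalDegree < Fintype.card F →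
      (∀ s : Fin n → F, MvPolynomial.eval s g = 0) → g = 0 := by
  intro n
  induction n with
  | zero =>
    intro g _ hz
    have hC : g = MvPolynomial.C (g.coeff 0) := (MvPolynomial.eq_C_of_isEmpty g)
    have := hz (fun i => 0)
    rw [hC] at this ⊢
    rw [MvPolynomial.eval_C] at this
    rw [this, map_zero]
  | succ n ih =>
    intro g hdeg hz
    set gh := MvPolynomial.finSuccEquiv F n g with hgh
    have hghdeg : gh.natDegree < Fintype.card F := by
      rw [hgh, MvPolynomial.natDegree_finSuccEquiv]
      exact lt_of_le_of_lt (MvPolynomial.degreeOf_le_totalDegree g 0) hdeg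
    have hroot : ∀ c : F, gh.eval (MvPolynomial.C c) = 0 := by
      intro c
      apply ih
      · apply lt_of_le_of_lt _ hdeg
        exact aux_totalDegree_eval_le g (MvPolynomial.C c)
          (by simp [MvPolynomial.totalDegree_C]) _ le_rfl
      · intro s
        rw [aux_eval_eval]
        simpa using hz (Fin.cons c s)
    have hCinj : Function.Injective (fun c : F => (MvPolynomial.C c : MvPolynomial (Fin n) F)) :=
      fun a b hab => MvPolynomial.C_injective _ _ hab
    have hgh0 : gh = 0 :=
      Polynomial.eq_zero_of_natDegree_lt_card_of_eval_eq_zero gh hCinj hroot hghdeg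
    have := (MvPolynomial.finSuccEquiv F n).injective (a₁ := g) (a₂ := 0)
    apply this
    rw [← hgh, hgh0, map_zero]

theorem aux_eval_sigmaPoly {F : Type*} [Field F] (U : Finset (F × F × F)) (i : ℕ)
    (x : Fin 3 → F) :
    MvPolynomial.eval x (sigmaPoly U i) = (U.val.map (fun u => dot3 u (x 0, x 1, x 2))).esymm i := by
  unfold sigmaPoly
  rw [← aux_esymm_hom (MvPolynomial.eval x) _ i, Multiset.map_map]
  congr 1
  apply Multiset.map_congr rfl
  intro u _
  simp [linForm, dot3, Function.comp]

theorem stmt_7 {p h : ℕ} (hp : p.Prime) (hodd : Odd p) (hh : 1 ≤ h)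
    {F : Type*} [Field F] [Fintype F] [DecidableEq F]
    (hcard : Fintype.card F = p ^ h)
    (U : Finset (F × F × F))
    (hUcard : U.card = Fintype.card F ^ 2 - 2)
    (hU : NoDetermine U)
    (hsum : ∑ u ∈ U, u = 0) :
    ∀ l : ℕ, l ≤ (Fintype.card F - 1) / 2 → sigmaPoly U (2 * l) = sigmaPoly U 2 ^ l := by
  intro l hl
  have hq2 : 1 < Fintype.card F := Fintype.one_lt_card
  have h2l : 2 * l ≤ Fintype.card F - 1 := by omega
  set D : MvPolynomial (Fin 3) F := sigmaPoly U (2 * l) - sigmaPoly U 2 ^ l with hD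
  have hdegD : D.totalDegree ≤ Fintype.card F - 1 := by
    rw [hD]
    apply le_trans (MvPolynomial.totalDegree_sub _ _)
    apply max_le
    · exact le_trans (aux_totalDegree_sigmaPoly U (2 * l)) h2l
    · apply le_trans (MvPolynomial.totalDegree_pow _ _)
      have := aux_totalDegree_sigmaPoly U 2
      have : l * (sigmaPoly U 2).totalDegree ≤ l * 2 := Nat.mul_le_mul_left l this
      omega
  set Dh : Polynomial (MvPolynomial (Fin 2) F) := MvPolynomial.finSuccEquiv F 2 D with hDh
  have hDhdeg : Dh.natDegree ≤ Fintype.card F - 1 := by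
    rw [hDh, MvPolynomial.natDegree_finSuccEquiv]
    exact le_trans (MvPolynomial.degreeOf_le_totalDegree D 0) hdegD
  set r : F → MvPolynomial (Fin 2) F := fun m =>
    MvPolynomial.C (-m) * MvPolynomial.X 0 + MvPolynomial.C (-(m ^ 2)) * MvPolynomial.X 1
    with hr
  have hrdeg : ∀ m : F, (r m).totalDegree ≤ 1 := by
    intro m
    rw [hr]
    have hC1 : (MvPolynomial.C (-m) : MvPolynomial (Fin 2) F).totalDegree = 0 :=
      MvPolynomial.totalDegree_C _
    have hC2 : (MvPolynomial.C (-(m ^ 2)) : MvPolynomial (Fin 2) F).totalDegree = 0 :=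
      MvPolynomial.totalDegree_C _
    apply le_trans (MvPolynomial.totalDegree_add _ _)
    apply max_le
    · exact le_trans (MvPolynomial.totalDegree_mul _ _)
        (by rw [hC1, MvPolynomial.totalDegree_X]; try norm_num)
    · exact le_trans (MvPolynomial.totalDegree_mul _ _)
        (by rw [hC2, MvPolynomial.totalDegree_X]; try norm_num)
  have hrinj : Function.Injective r := by
    intro m m' he
    have := congrArg (MvPolynomial.eval (fun j : Fin 2 => if j = 0 then (-1 : F) else 0)) he
    simp [hr] at this
    exact this
  have hroot : ∀ m : F, Dh.eval (r m) = 0 := by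
    intro m
    set g : MvPolynomial (Fin 2) F := Dh.eval (r m) with hg
    have hgdeg : g.totalDegree ≤ Fintype.card F - 1 := by
      rw [hg, hDh]
      exact aux_totalDegree_eval_le D (r m) (hrdeg m) _ hdegD
    have hgz : ∀ s : Fin 2 → F, MvPolynomial.eval s g = 0 := by
      intro s
      set y : F := MvPolynomial.eval s (r m) with hy
      have hchain : MvPolynomial.eval s g = MvPolynomial.eval (Fin.cons y s) D := by
        rw [hg, hDh, hy]
        exact aux_eval_eval D (r m) s
      rw [hchain]
      have hx0 : (Fin.cons y s : Fin 3 → F) 0 = y := rfl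
      have hx1 : (Fin.cons y s : Fin 3 → F) 1 = s 0 := rfl
      have hx2 : (Fin.cons y s : Fin 3 → F) 2 = s 1 := rfl
      rw [hD, map_sub, map_pow, aux_eval_sigmaPoly, aux_eval_sigmaPoly, hx0, hx1, hx2]
      set v : F × F × F := (y, s 0, s 1) with hv
      have hmeet : ∃ t : F × F × F, t ≠ 0 ∧ quadQ t = 0 ∧ dot3 v t = 0 := by
        refine ⟨(1, m, m ^ 2), ?_, ?_, ?_⟩
        · intro hcon
          have := congrArg Prod.fst hcon
          simp at this
        · simp [quadQ]
        · rw [hv]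
          simp only [dot3, hy, hr]
          simp [MvPolynomial.eval_X, MvPolynomial.eval_C]
          ring
      have := aux_pointwise hp hodd hh hcard U hUcard hU hsum v hmeet l h2l
      rw [this, sub_self]
    exact aux_zero_of_eval 2 g (by omega) hgz
  have hDh0 : Dh = 0 :=
    Polynomial.eq_zero_of_natDegree_lt_card_of_eval_eq_zero Dh hrinj hroot (by omega)
  have hD0 : D = 0 := by
    have := (MvPolynomial.finSuccEquiv F 2).injective (a₁ := D) (a₂ := 0)
    apply this
    rw [← hDh, hDh0, map_zero]
  rw [← sub_eq_zero]
  exact hD0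
end
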